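/- Let α : ℝ → ℝ be a C¹ periodic function (with some period p > 0) such that α' + α² is constant. Then α is constant. -/

import Mathlib

/-- Remark 6.1 (parenthetical claim in Remark `cnsta`): a `C¹` periodic function
`α : ℝ → ℝ` such that `α' + α²` is constant must itself be constant. -/
theorem stmt_8 (p : ℝ) (hp : 0 < p) (α : ℝ → ℝ) (hα : ContDiff ℝ 1 α)
    (hper : Function.Periodic α p)
    (hconst : ∃ c : ℝ, ∀ t : ℝ, deriv α t + α t ^ 2 = c) :
    ∃ a : ℝ, ∀ t : ℝ, α t = a := by
  obtain ⟨c, hc⟩ := hconst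
  have hdiff : Differentiable ℝ α := hα.differentiable one_ne_zero
  have hcont : Continuous α := hdiff.continuous
  -- max and min over [0,p], which are global by periodicity
  obtain ⟨t₀, ht₀, hmax⟩ := (isCompact_Icc (a := (0:ℝ)) (b := p)).exists_isMaxOn
    (Set.nonempty_Icc.2 hp.le) (hcont.continuousOn)
  obtain ⟨t₁, ht₁, hmin⟩ := (isCompact_Icc (a := (0:ℝ)) (b := p)).exists_isMinOn
    (Set.nonempty_Icc.2 hp.le) (hcont.continuousOn)
  have hglobmax : ∀ t, α t ≤ α t₀ := by
    intro t
    obtain ⟨y, hy, hxy⟩ := hper.exists_mem_Ico₀ hp t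
    rw [hxy]
    exact hmax (Set.mem_Icc.2 ⟨hy.1, hy.2.le⟩)
  have hglobmin : ∀ t, α t₁ ≤ α t := by
    intro t
    obtain ⟨y, hy, hxy⟩ := hper.exists_mem_Ico₀ hp t
    rw [hxy]
    exact hmin (Set.mem_Icc.2 ⟨hy.1, hy.2.le⟩)
  have hd0 : deriv α t₀ = 0 := by
    have : IsLocalMax α t₀ := Filter.Eventually.of_forall hglobmax
    exact this.deriv_eq_zero
  have hd1 : deriv α t₁ = 0 := by
    have : IsLocalMin α t₁ := Filter.Eventually.of_forall hglobmin
    exact this.deriv_eq_zero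
  have hc0 : α t₀ ^ 2 = c := by have := hc t₀; rw [hd0] at this; linarith
  have hc1 : α t₁ ^ 2 = c := by have := hc t₁; rw [hd1] at this; linarith
  by_cases heq : α t₁ = α t₀
  · exact ⟨α t₀, fun t => le_antisymm (hglobmax t) (heq ▸ hglobmin t)⟩
  · -- then α t₁ = -α t₀, α t₀ ≥ 0, so deriv α ≥ 0 everywhere
    have hneg : α t₁ = -α t₀ := by
      have h2 : α t₁ ^ 2 = α t₀ ^ 2 := by rw [hc0, hc1]
      rcases sq_eq_sq_iff_eq_or_eq_neg.mp h2 with h | h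
      · exact absurd h heq
      · exact h
    have hnn : 0 ≤ α t₀ := by
      have := hglobmin t₀
      rw [hneg] at this
      linarith
    have hderiv_nonneg : ∀ t, 0 ≤ deriv α t := by
      intro t
      have hb : α t ^ 2 ≤ c := by
        rw [← hc0]
        refine sq_le_sq' ?_ (hglobmax t)
        rw [← hneg]; exact hglobmin t
      have := hc t
      linarith
    have hmono : Monotone α := monotone_of_deriv_nonneg hdiff hderiv_nonneg
    -- monotone + periodic ⇒ constant
    refine ⟨α 0, fun t => ?_⟩
    rcases le_total 0 t with ht | ht
    · obtain ⟨n, hn⟩ := Archimedean.arch t hp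
      have h1 : α 0 ≤ α t := hmono ht
      have h2 : α t ≤ α (0 + n • p) := hmono (by simpa using hn)
      have h3 : α (0 + n • p) = α 0 := by
        simpa [nsmul_eq_mul] using (hper.nat_mul n) 0
      rw [h3] at h2
      exact le_antisymm h2 h1
    · obtain ⟨n, hn⟩ := Archimedean.arch (-t) hp
      have h1 : α t ≤ α 0 := hmono ht
      have h2 : α 0 ≤ α (t + n • p) := hmono (by linarith [hn])
      have h3 : α (t + n • p) = α t := by
        have := (hper.nat_mul n) t
        simpa [nsmul_eq_mul] using this
      rw [h3] at h2
      exact le_antisymm h1 h2
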